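/- Let R be an F-pure, F-finite commutative Noetherian ring of prime characteristic p, let I, 𝔟 ⊆ R be ideals, and let e ≥ 1. If D^{(e)}_R I = D^{(e)}_R 𝔟, then C^e_R I = C^e_R 𝔟. -/
import Mathlib


/-- `δ : R → R` is an `R^{p^e}`-linear (additive) endomorphism of `R`, i.e. an element
of `D^{(e)}_R = Hom_{R^{p^e}}(R, R)`. -/
def IsPeLinearMap (p e : ℕ) {R : Type*} [CommRing R] (δ : R → R) : Prop :=
  (∀ x y, δ (x + y) = δ x + δ y) ∧ ∀ r x, δ (r ^ p ^ e * x) = r ^ p ^ e * δ x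

/-- `φ : R → R` is a `p^{-e}`-linear (Cartier) map: `φ` is additive and
`φ(r^{p^e}·x) = r·φ(x)`. -/
def IsCartierMap (p e : ℕ) {R : Type*} [CommRing R] (φ : R → R) : Prop :=
  (∀ x y, φ (x + y) = φ x + φ y) ∧ ∀ r x, φ (r ^ p ^ e * x) = r * φ x

/-- The ideal `D^{(e)}_R I` generated by the values of `R^{p^e}`-linear endomorphisms
on elements of `I`. -/
def diffOpIdeal (p e : ℕ) {R : Type*} [CommRing R] (I : Ideal R) : Ideal R :=
  Ideal.span {y | ∃ δ : R → R, IsPeLinearMap p e δ ∧ ∃ x ∈ I, y = δ x}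

/-- The ideal `C^e_R I` generated by the values of `p^{-e}`-linear maps on elements
of `I`. -/
def cartierIdeal (p e : ℕ) {R : Type*} [CommRing R] (I : Ideal R) : Ideal R :=
  Ideal.span {y | ∃ φ : R → R, IsCartierMap p e φ ∧ ∃ x ∈ I, y = φ x}

/-- The (big) test ideal `τ_R(I^λ) = ⋃_e C^e_R I^{⌈p^e λ⌉}`. -/
noncomputable def testIdeal (p : ℕ) {R : Type*} [CommRing R] (I : Ideal R) (l : ℝ) :
    Ideal R :=
  ⨆ e : ℕ, cartierIdeal p e (I ^ ⌈(p : ℝ) ^ e * l⌉₊)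

/-- `R` is `F`-finite: `R` is a finitely generated module over its subring `R^p`
of `p`-th powers. -/
def IsFFinite (p : ℕ) (R : Type*) [CommRing R] : Prop :=
  ∃ (n : ℕ) (g : Fin n → R), ∀ x : R, ∃ c : Fin n → R, x = ∑ i, (c i) ^ p * g i

/-- `R` is `F`-pure: for every `e ≥ 1` there is a `p^{-e}`-linear map `γ : R → R`
with `γ(1) = 1`. -/
def IsFPure (p : ℕ) (R : Type*) [CommRing R] : Prop :=
  ∀ e : ℕ, 1 ≤ e → ∃ γ : R → R, IsCartierMap p e γ ∧ γ 1 = 1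

/-- Regularity of a Noetherian ring of prime characteristic `p`, via Kunz's theorem:
the Frobenius endomorphism is flat. -/
def IsRegularKunz (p : ℕ) (S : Type*) [CommRing S] : Prop :=
  ∃ F : S →+* S, (∀ x, F x = x ^ p) ∧ F.Flat

/-- The Frobenius power `𝔞^{[p^e]}` of an ideal. -/
def frobeniusPower (p e : ℕ) {R : Type*} [CommRing R] (a : Ideal R) : Ideal R :=
  Ideal.span ((fun x => x ^ p ^ e) '' (a : Set R))

/-- `ν^𝔞_J(p^e) = max { t | Jᵗ ⊄ 𝔞^{[p^e]} }`. -/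
noncomputable def fThresholdNu (p : ℕ) {R : Type*} [CommRing R] (J a : Ideal R)
    (e : ℕ) : ℕ :=
  sSup {t : ℕ | ¬ J ^ t ≤ frobeniusPower p e a}

/-- The set of `F`-jumping numbers of an ideal `I`. -/
noncomputable def fJumpingNumbers (p : ℕ) {R : Type*} [CommRing R] (I : Ideal R) :
    Set ℝ :=
  {l : ℝ | 0 < l ∧ ∀ ε : ℝ, 0 < ε → testIdeal p I l ≠ testIdeal p I (l - ε)}


lemma cartier_apply_mem {p e : ℕ} {R : Type*} [CommRing R] {I : Ideal R} :
    ∀ y ∈ diffOpIdeal p e I, ∀ φ : R → R, IsCartierMap p e φ →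
      φ y ∈ cartierIdeal p e I := by
  intro y hy
  refine Submodule.span_induction ?_ ?_ ?_ ?_ hy
  · rintro y ⟨δ, hδ, x, hx, rfl⟩ φ hφ
    exact Ideal.subset_span ⟨φ ∘ δ,
      ⟨fun a c => by simp [hδ.1 a c, hφ.1],
       fun r a => by simp [hδ.2 r a, hφ.2]⟩, x, hx, rfl⟩
  · intro φ hφ
    have h0 : φ 0 = 0 := by
      have := hφ.1 0 0
      simpa using this.symm
    simpa [h0] using (cartierIdeal p e I).zero_mem
  · intro a c _ _ ha hc φ hφ
    rw [hφ.1 a c]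
    exact Ideal.add_mem _ (ha φ hφ) (hc φ hφ)
  · intro r a _ ha φ hφ
    have := ha (fun x => φ (r * x))
      ⟨fun x y => by show φ (r * (x + y)) = _; rw [mul_add, hφ.1],
       fun s x => by
        show φ (r * (s ^ p ^ e * x)) = s * φ (r * x)
        rw [show r * (s ^ p ^ e * x) = s ^ p ^ e * (r * x) by ring, hφ.2]⟩
    simpa [smul_eq_mul] using this

lemma cartierIdeal_diffOpIdeal (p e : ℕ) {R : Type*} [CommRing R] (I : Ideal R) :
    cartierIdeal p e (diffOpIdeal p e I) = cartierIdeal p e I := by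
  apply le_antisymm
  · rw [cartierIdeal, Ideal.span_le]
    rintro y ⟨φ, hφ, x, hx, rfl⟩
    exact cartier_apply_mem x hx φ hφ
  · rw [cartierIdeal, Ideal.span_le]
    rintro y ⟨φ, hφ, x, hx, rfl⟩
    refine Ideal.subset_span ⟨φ, hφ, x, ?_, rfl⟩
    exact Ideal.subset_span ⟨id, ⟨fun _ _ => rfl, fun _ _ => rfl⟩, x, hx, rfl⟩

/-- Lemma `LemmaRestrictionDmodCartier`.  Let `R` be an `F`-pure
`F`-finite Noetherian ring of prime characteristic `p` and `I, 𝔟 ⊆ R` ideals, `e ≥ 1`.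
If `D^{(e)}_R I = D^{(e)}_R 𝔟`, then `C^e_R I = C^e_R 𝔟`. -/
theorem cartierIdeal_eq_of_diffOpIdeal_eq
    (p : ℕ) (hp : p.Prime)
    (R : Type*) [CommRing R] [IsNoetherianRing R] [CharP R p]
    (hFF : IsFFinite p R) (hFP : IsFPure p R)
    (I b : Ideal R) (e : ℕ) (he : 1 ≤ e)
    (h : diffOpIdeal p e I = diffOpIdeal p e b) :
    cartierIdeal p e I = cartierIdeal p e b := by
  rw [← cartierIdeal_diffOpIdeal p e I, h, cartierIdeal_diffOpIdeal]
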